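/- arXiv:1903.08304 — 2 statements merged into one kernel-verified Lean document; each statement's English description precedes it below -/
import Mathlib

section
/- Let f ∈ 𝒮(ℝ) be a Schwartz function. Then for every x ∈ ℝ the limits C^±f(x) = lim_{ε↓0} Cf(x ± iε) exist, the principal-value limit Hf(x) = lim_{ε↓0} (1/π)∫_{|s−x|>ε} f(s)/(x−s) ds exists, and C^±f(x) = ±(1/2) f(x) + (i/2) Hf(x). In particular C^+f(x) − C^−f(x) = f(x) and C^+f(x) + C^−f(x) = i Hf(x) for every x ∈ ℝ. -/
open MeasureTheory Filter Topology Complex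

/-- The Cauchy transform `Cf(z) = (1/(2πi)) ∫_ℝ f(s)/(s-z) ds`. -/
noncomputable def cauchyE (f : ℝ → ℂ) (z : ℂ) : ℂ :=
  (2 * (Real.pi : ℂ) * Complex.I)⁻¹ * ∫ s : ℝ, f s / ((s : ℂ) - z)

namespace PlemeljAux

lemma odd_integral_zero (g : ℝ → ℂ) (hg : ∀ t, g (-t) = -g t) :
    ∫ t : ℝ, g t = 0 := by
  have h1 : ∫ t : ℝ, g (-t) = ∫ t : ℝ, g t := integral_neg_eq_self g volume
  simp_rw [hg, integral_neg] at h1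
  linear_combination (-1/2 : ℂ) * h1

lemma shifted_odd_integral_zero (g : ℝ → ℂ) (x : ℝ)
    (hodd : ∀ t, g (x + -t) = - g (x + t)) : ∫ s : ℝ, g s = 0 := by
  rw [← integral_add_left_eq_self g x]
  exact odd_integral_zero _ hodd

lemma mul_bdd_integrable {g k : ℝ → ℂ} (hg : Integrable g)
    (hk : AEStronglyMeasurable k volume) (C : ℝ) (hC : ∀ s, ‖k s‖ ≤ C) :
    Integrable (fun s => g s * k s) := by
  have := hg.bdd_mul hk (ae_of_all _ hC)
  simpa [mul_comm] using this

/-- the shifted gaussian, complex valued -/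
noncomputable def gs (x : ℝ) : ℝ → ℂ := fun s => ((Real.exp (-(s-x)^2) : ℝ) : ℂ)

lemma gs_cont (x : ℝ) : Continuous (gs x) := by
  unfold gs
  exact Complex.continuous_ofReal.comp (by continuity)

lemma gs_real_integrable (x : ℝ) : Integrable (fun s : ℝ => Real.exp (-(s-x)^2)) := by
  have h := (integrable_exp_neg_mul_sq (b := 1) one_pos).comp_sub_right x
  simpa using h

lemma gs_integrable (x : ℝ) : Integrable (gs x) := (gs_real_integrable x).ofReal

lemma gs_norm (x s : ℝ) : ‖gs x s‖ = Real.exp (-(s-x)^2) := by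
  rw [gs, Complex.norm_real, Real.norm_eq_abs, _root_.abs_of_nonneg (Real.exp_nonneg _)]

/-- the regularized part `G = f - f(x)·gauss` -/
noncomputable def pG (f : SchwartzMap ℝ ℂ) (x : ℝ) : ℝ → ℂ :=
  fun s => f s - f x * gs x s

lemma pG_cont (f : SchwartzMap ℝ ℂ) (x : ℝ) : Continuous (pG f x) :=
  f.continuous.sub (continuous_const.mul (gs_cont x))

lemma pG_integrable (f : SchwartzMap ℝ ℂ) (x : ℝ) : Integrable (pG f x) :=
  f.integrable.sub ((gs_integrable x).const_mul _)

lemma pG_norm_le (f : SchwartzMap ℝ ℂ) (x s : ℝ) :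
    ‖pG f x s‖ ≤ ‖f s‖ + ‖f x‖ * Real.exp (-(s-x)^2) := by
  refine (norm_sub_le _ _).trans ?_
  rw [norm_mul, gs_norm]

lemma pG_lip (f : SchwartzMap ℝ ℂ) (x : ℝ) :
    ∃ L : ℝ, 0 ≤ L ∧ ∀ s : ℝ, ‖pG f x s‖ ≤ L * |s - x| := by
  set G : ℝ → ℂ := pG f x with hG
  have gderiv : ∀ s : ℝ, HasDerivAt (fun s : ℝ => ((Real.exp (-(s-x)^2) : ℝ) : ℂ))
      ((Real.exp (-(s-x)^2) * (-(2*(s-x))) : ℝ) : ℂ) s := by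
    intro s
    have h1 : HasDerivAt (fun s : ℝ => -(s-x)^2) (-(2*(s-x))) s := by
      have h0 : HasDerivAt (fun s : ℝ => s - x) 1 s := (hasDerivAt_id s).sub_const x
      have := (h0.fun_pow 2).fun_neg
      simpa [mul_comm] using this
    exact (h1.exp).ofReal_comp
  set Md : ℝ := SchwartzMap.seminorm ℝ 0 0 (SchwartzMap.derivCLM ℝ ℂ f) with hMd
  have hfd : ∀ s, ‖deriv (⇑f) s‖ ≤ Md := by
    intro s
    have := SchwartzMap.norm_le_seminorm ℝ (SchwartzMap.derivCLM ℝ ℂ f) s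
    rwa [SchwartzMap.derivCLM_apply] at this
  refine ⟨Md + ‖f x‖, by positivity, fun s => ?_⟩
  have hGd : ∀ s, HasDerivAt G
      (deriv (⇑f) s - f x * ((Real.exp (-(s-x)^2) * (-(2*(s-x))) : ℝ) : ℂ)) s := by
    intro s
    exact ((f.differentiableAt).hasDerivAt).sub ((gderiv s).const_mul (f x))
  have hbd : ∀ s, ‖deriv G s‖ ≤ Md + ‖f x‖ := by
    intro s
    rw [(hGd s).deriv]
    refine (norm_sub_le _ _).trans ?_
    gcongr
    · exact hfd s
    · rw [norm_mul]
      have h2t : ‖((Real.exp (-(s-x)^2) * (-(2*(s-x))) : ℝ) : ℂ)‖ ≤ 1 := by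
        rw [Complex.norm_real, Real.norm_eq_abs, abs_mul, abs_neg]
        calc |Real.exp (-(s-x)^2)| * |2*(s-x)| = |2*(s-x)| * Real.exp (-(s-x)^2) := by
              rw [_root_.abs_of_nonneg (Real.exp_nonneg _)]; ring
          _ ≤ 1 := by
              have h1 : (1:ℝ) + (s-x)^2 ≤ Real.exp ((s-x)^2) := by
                have := Real.add_one_le_exp ((s-x)^2); linarith
              have h3 : Real.exp (-(s-x)^2) ≤ (1 + (s-x)^2)⁻¹ := by
                rw [Real.exp_neg]; exact inv_anti₀ (by positivity) h1
              have h4 : |2*(s-x)| ≤ 1 + (s-x)^2 := by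
                rcases abs_cases (2*(s-x)) with ⟨h,_⟩|⟨h,_⟩ <;>
                  nlinarith [sq_nonneg (s-x-1), sq_nonneg (s-x+1)]
              calc |2*(s-x)| * Real.exp (-(s-x)^2) ≤ (1+(s-x)^2) * (1+(s-x)^2)⁻¹ :=
                    mul_le_mul h4 h3 (Real.exp_nonneg _) (by positivity)
                _ = 1 := by field_simp
      calc ‖f x‖ * ‖((Real.exp (-(s-x)^2) * (-(2*(s-x))) : ℝ) : ℂ)‖ ≤ ‖f x‖ * 1 := by gcongr
        _ = ‖f x‖ := mul_one _
  have hGx : G x = 0 := by simp [hG, pG, gs]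
  have key := Convex.norm_image_sub_le_of_norm_deriv_le (f := G) (C := Md + ‖f x‖)
    (fun y _ => (hGd y).differentiableAt) (fun y _ => hbd y) convex_univ
    (Set.mem_univ x) (Set.mem_univ s)
  rw [hGx, sub_zero] at key
  exact key

lemma poisson_subst (f : SchwartzMap ℝ ℂ) (x : ℝ) {ε : ℝ} (hε : 0 < ε) :
    ∫ u : ℝ, f (x + ε*u) * (((u^2+1)⁻¹ : ℝ) : ℂ)
      = ∫ s : ℝ, f s * ((ε / ((s-x)^2+ε^2) : ℝ) : ℂ) := by
  set Ψ : ℝ → ℂ := fun s => f s * ((ε / ((s-x)^2+ε^2) : ℝ) : ℂ) with hΨ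
  have h1 : ∫ u : ℝ, Ψ (x + ε*u) = |ε⁻¹| • ∫ s : ℝ, Ψ s := by
    rw [← integral_add_left_eq_self Ψ x]
    exact MeasureTheory.Measure.integral_comp_mul_left (fun v => Ψ (x + v)) ε
  have h2 : ∀ u : ℝ, Ψ (x + ε*u) = (ε⁻¹ : ℝ) • (f (x + ε*u) * (((u^2+1)⁻¹ : ℝ) : ℂ)) := by
    intro u
    have hne : ε ≠ 0 := hε.ne'
    have : (ε / ((x + ε*u - x)^2 + ε^2) : ℝ) = ε⁻¹ * (u^2+1)⁻¹ := by
      field_simp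
      ring
    rw [hΨ]
    simp only [this, Complex.ofReal_mul, Complex.real_smul]
    ring
  simp_rw [h2] at h1
  rw [integral_smul, abs_of_pos (inv_pos.mpr hε)] at h1
  exact smul_right_injective ℂ (inv_ne_zero hε.ne') h1

lemma poisson_tendsto (f : SchwartzMap ℝ ℂ) (x : ℝ) :
    Tendsto (fun ε : ℝ => ∫ s : ℝ, f s * ((ε / ((s-x)^2+ε^2) : ℝ) : ℂ)) (𝓝[>] 0)
      (𝓝 ((Real.pi : ℂ) * f x)) := by
  set M0 : ℝ := SchwartzMap.seminorm ℝ 0 0 f with hM0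
  have hM0' : ∀ s, ‖f s‖ ≤ M0 := fun s => SchwartzMap.norm_le_seminorm ℝ f s
  have key : Tendsto (fun ε : ℝ => ∫ u : ℝ, f (x + ε*u) * (((u^2+1)⁻¹ : ℝ) : ℂ)) (𝓝[>] 0)
      (𝓝 (∫ u : ℝ, f x * (((u^2+1)⁻¹ : ℝ) : ℂ))) := by
    apply tendsto_integral_filter_of_dominated_convergence
      (bound := fun u : ℝ => M0 * (1+u^2)⁻¹)
    · filter_upwards with ε
      apply Continuous.aestronglyMeasurable
      apply Continuous.mul
      · exact f.continuous.comp (by continuity)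
      · apply Complex.continuous_ofReal.comp
        apply Continuous.inv₀ (by continuity)
        intro u; positivity
    · filter_upwards with ε
      filter_upwards with u
      rw [norm_mul, Complex.norm_real, Real.norm_eq_abs,
        _root_.abs_of_nonneg (by positivity : (0:ℝ) ≤ (u^2+1)⁻¹)]
      have h5 : ((u^2+1):ℝ)⁻¹ = (1+u^2)⁻¹ := by ring_nf
      rw [h5]
      gcongr
      exact hM0' _
    · exact integrable_inv_one_add_sq.const_mul M0
    · filter_upwards with u
      have h1 : Tendsto (fun ε : ℝ => x + ε*u) (𝓝[>] 0) (𝓝 x) := by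
        have : Tendsto (fun ε : ℝ => x + ε*u) (𝓝 0) (𝓝 (x + 0*u)) := by
          apply Tendsto.add tendsto_const_nhds
          exact (tendsto_id.mul_const u)
        simpa using this.mono_left nhdsWithin_le_nhds
      exact ((f.continuous.tendsto x).comp h1).mul_const _
  have hval : ∫ u : ℝ, f x * (((u^2+1)⁻¹ : ℝ) : ℂ) = (Real.pi : ℂ) * f x := by
    have h7 : ∫ u : ℝ, ((u^2+1)⁻¹ : ℝ) = Real.pi := by
      rw [← integral_univ_inv_one_add_sq]
      congr 1; funext u; ring_nf
    have h8 : (fun u : ℝ => f x * (((u^2+1)⁻¹ : ℝ) : ℂ))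
        = fun u : ℝ => ((u^2+1)⁻¹ : ℝ) • f x := by
      funext u; rw [Complex.real_smul]; ring
    rw [h8, integral_smul_const, h7, Complex.real_smul, mul_comm]
  have key2 : Tendsto (fun ε : ℝ => ∫ u : ℝ, f (x + ε*u) * (((u^2+1)⁻¹ : ℝ) : ℂ)) (𝓝[>] 0)
      (𝓝 ((Real.pi : ℂ) * f x)) := hval ▸ key
  refine key2.congr' ?_
  filter_upwards [self_mem_nhdsWithin] with ε hε
  exact poisson_subst f x hε

lemma abs_kernel_le {a : ℝ} (ha : a ≠ 0) (ε : ℝ) : |a / (a^2+ε^2)| ≤ |a|⁻¹ := by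
  have ha' : 0 < |a| := abs_pos.mpr ha
  have hd : 0 < a^2+ε^2 := by positivity
  rw [abs_div, _root_.abs_of_nonneg hd.le, div_le_iff₀ hd]
  have h1 : |a|⁻¹ * a^2 = |a| := by
    rw [← _root_.sq_abs, sq]; field_simp
  nlinarith [mul_nonneg (inv_nonneg.mpr ha'.le) (sq_nonneg ε)]

lemma abs_kernelA_le' (a : ℝ) {ε : ℝ} (hε : 0 < ε) : |a/(a^2+ε^2)| ≤ (2*ε)⁻¹ := by
  have hd : 0 < a^2+ε^2 := by positivity
  rw [abs_div, _root_.abs_of_nonneg hd.le, inv_eq_one_div, div_le_div_iff₀ hd (by positivity)]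
  nlinarith [sq_nonneg (|a| - ε), _root_.sq_abs a]

lemma abs_kernelP_le (a : ℝ) {ε : ℝ} (hε : 0 < ε) : |ε/(a^2+ε^2)| ≤ ε⁻¹ := by
  have hd : 0 < a^2+ε^2 := by positivity
  rw [abs_div, _root_.abs_of_nonneg hd.le, _root_.abs_of_nonneg hε.le,
    div_le_iff₀ hd]
  have : ε⁻¹ * (a^2+ε^2) = ε⁻¹ * a^2 + ε := by field_simp [hε.ne']
  nlinarith [mul_nonneg (inv_nonneg.mpr hε.le) (sq_nonneg a)]

lemma gauss_kernelA_odd (x : ℝ) (ε : ℝ) :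
    ∫ s : ℝ, gs x s * (((s-x) / ((s-x)^2+ε^2) : ℝ) : ℂ) = 0 := by
  apply shifted_odd_integral_zero _ x
  intro t
  have e1 : x + -t - x = -t := by ring
  have e2 : x + t - x = t := by ring
  simp only [gs, e1, e2, neg_sq]
  push_cast
  ring

lemma gauss_kernelH_odd (x : ℝ) (ε : ℝ) :
    ∫ s : ℝ, Set.indicator {s : ℝ | ε < |s-x|}
      (fun s => gs x s * (((x-s)⁻¹ : ℝ) : ℂ)) s = 0 := by
  apply shifted_odd_integral_zero _ x
  intro t
  have e3 : x - (x + -t) = t := by ring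
  have e4 : x - (x + t) = -t := by ring
  by_cases h : ε < |t|
  · rw [Set.indicator_of_mem (by simpa using h),
      Set.indicator_of_mem (by simp only [Set.mem_setOf_eq]; simpa using h)]
    simp only [gs, e3, e4]
    have e1 : x + -t - x = -t := by ring
    have e2 : x + t - x = t := by ring
    rw [e1, e2, inv_neg]
    simp only [neg_sq]
    push_cast
    ring
  · rw [Set.indicator_of_notMem (by simpa using h),
      Set.indicator_of_notMem (by simp only [Set.mem_setOf_eq]; simpa using h), neg_zero]

lemma split_plus (w : ℂ) (x : ℝ) {ε : ℝ} (hε : 0 < ε) (s : ℝ) :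
    w / ((s:ℂ) - ((x:ℂ) + ε*Complex.I))
      = w * (((s-x)/((s-x)^2+ε^2) : ℝ) : ℂ)
        + Complex.I * (w * ((ε/((s-x)^2+ε^2) : ℝ) : ℂ)) := by
  have h0 : ((s-x)^2+ε^2 : ℝ) ≠ 0 := by positivity
  have hS : ((s:ℂ)-(x:ℂ))^2+((ε:ℝ):ℂ)^2 ≠ 0 := by
    intro h
    apply h0
    have h2 : (((s-x)^2+ε^2 : ℝ) : ℂ) = 0 := by push_cast; linear_combination h
    exact_mod_cast h2
  have hne : (s:ℂ) - ((x:ℂ) + ε*Complex.I) ≠ 0 := by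
    intro h
    have := congrArg Complex.im h
    simp at this
    exact hε.ne' this
  rw [div_eq_iff hne]
  push_cast
  field_simp [hS]
  ring_nf
  simp [Complex.I_sq]

lemma split_minus (w : ℂ) (x : ℝ) {ε : ℝ} (hε : 0 < ε) (s : ℝ) :
    w / ((s:ℂ) - ((x:ℂ) - ε*Complex.I))
      = w * (((s-x)/((s-x)^2+ε^2) : ℝ) : ℂ)
        - Complex.I * (w * ((ε/((s-x)^2+ε^2) : ℝ) : ℂ)) := by
  have h0 : ((s-x)^2+ε^2 : ℝ) ≠ 0 := by positivity
  have hS : ((s:ℂ)-(x:ℂ))^2+((ε:ℝ):ℂ)^2 ≠ 0 := by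
    intro h
    apply h0
    have h2 : (((s-x)^2+ε^2 : ℝ) : ℂ) = 0 := by push_cast; linear_combination h
    exact_mod_cast h2
  have hne : (s:ℂ) - ((x:ℂ) - ε*Complex.I) ≠ 0 := by
    intro h
    have := congrArg Complex.im h
    simp at this
    exact hε.ne' this
  rw [div_eq_iff hne]
  push_cast
  field_simp [hS]
  ring_nf
  simp [Complex.I_sq]

end PlemeljAux

open PlemeljAux in
/-- Plemelj formulas for Schwartz functions. -/
theorem plemelj_schwartz (f : SchwartzMap ℝ ℂ) (x : ℝ) :
    ∃ Cp Cm Hv : ℂ,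
      Tendsto (fun ε : ℝ => cauchyE f ((x : ℂ) + ε * Complex.I)) (𝓝[>] 0) (𝓝 Cp) ∧
      Tendsto (fun ε : ℝ => cauchyE f ((x : ℂ) - ε * Complex.I)) (𝓝[>] 0) (𝓝 Cm) ∧
      Tendsto (fun ε : ℝ =>
          (Real.pi : ℂ)⁻¹ * ∫ s in {s : ℝ | ε < |s - x|}, f s / ((x : ℂ) - s))
        (𝓝[>] 0) (𝓝 Hv) ∧
      Cp = (1 / 2 : ℂ) * f x + (Complex.I / 2) * Hv ∧
      Cm = -(1 / 2 : ℂ) * f x + (Complex.I / 2) * Hv ∧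
      Cp - Cm = f x ∧ Cp + Cm = Complex.I * Hv := by
  classical
  obtain ⟨L, hL0, hLip⟩ := pG_lip f x
  set G : ℝ → ℂ := pG f x with hGdef
  have hGs : ∀ s, G s = f s - f x * gs x s := fun s => rfl
  have hfs : ∀ s : ℝ, f s = G s + f x * gs x s := by intro s; rw [hGs]; ring
  have hGi : Integrable G := pG_integrable f x
  have hGc : Continuous G := pG_cont f x
  have hae : ∀ᵐ s : ℝ, s ≠ x := by
    refine ae_iff.mpr ?_
    simpa using measure_singleton (x : ℝ)
  -- dominating function
  set D : ℝ → ℝ := fun s => Set.indicator (Metric.closedBall x 1) (fun _ => L) s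
      + Set.indicator {s : ℝ | 1 < |s-x|} (fun s => ‖G s‖) s with hD
  have hmeas1 : MeasurableSet {s : ℝ | 1 < |s-x|} :=
    (isOpen_lt continuous_const ((continuous_id.sub continuous_const).abs)).measurableSet
  have hDint : Integrable D := by
    apply Integrable.add
    · rw [integrable_indicator_iff measurableSet_closedBall]
      exact integrableOn_const measure_closedBall_lt_top.ne
    · rw [integrable_indicator_iff hmeas1]
      exact hGi.norm.integrableOn
  have hDnn : ∀ s, 0 ≤ D s := by
    intro s
    apply add_nonneg
    · exact Set.indicator_nonneg (fun _ _ => hL0) s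
    · exact Set.indicator_nonneg (fun s _ => norm_nonneg _) s
  have hDb : ∀ s : ℝ, s ≠ x → ∀ c : ℝ, |c| ≤ |s-x|⁻¹ → ‖G s‖ * |c| ≤ D s := by
    intro s hs c hc
    have ha : s - x ≠ 0 := sub_ne_zero.mpr hs
    have ha' : 0 < |s - x| := abs_pos.mpr ha
    rcases le_or_gt |s - x| 1 with h1 | h1
    · have hmem : s ∈ Metric.closedBall x 1 := by
        simpa [Metric.mem_closedBall, Real.dist_eq] using h1
      have hle : ‖G s‖ * |c| ≤ (L * |s-x|) * |s-x|⁻¹ :=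
        mul_le_mul (hLip s) hc (abs_nonneg _) (by positivity)
      have hL' : (L * |s-x|) * |s-x|⁻¹ = L := by field_simp
      have hDge : L ≤ D s := by
        rw [hD]
        simp only
        rw [Set.indicator_of_mem hmem]
        exact le_add_of_nonneg_right (Set.indicator_nonneg (fun s _ => norm_nonneg _) s)
      calc ‖G s‖ * |c| ≤ (L * |s-x|) * |s-x|⁻¹ := hle
        _ = L := hL'
        _ ≤ D s := hDge
    · have hmem : s ∈ {s : ℝ | 1 < |s-x|} := h1
      have hinv1 : |s-x|⁻¹ ≤ 1 := inv_le_one_of_one_le₀ h1.le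
      have hle : ‖G s‖ * |c| ≤ ‖G s‖ * 1 :=
        mul_le_mul_of_nonneg_left (hc.trans hinv1) (norm_nonneg _)
      have hDge : ‖G s‖ ≤ D s := by
        rw [hD]
        simp only
        rw [Set.indicator_of_mem hmem]
        exact le_add_of_nonneg_left (Set.indicator_nonneg (fun _ _ => hL0) s)
      calc ‖G s‖ * |c| ≤ ‖G s‖ * 1 := hle
        _ = ‖G s‖ := mul_one _
        _ ≤ D s := hDge
  have hbound1 : ∀ s : ℝ, s ≠ x → ∀ ε : ℝ,
      ‖G s * (((s-x)/((s-x)^2+ε^2) : ℝ) : ℂ)‖ ≤ D s := by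
    intro s hs ε
    rw [norm_mul, Complex.norm_real, Real.norm_eq_abs]
    exact hDb s hs _ (abs_kernel_le (sub_ne_zero.mpr hs) ε)
  have hboundH : ∀ s : ℝ, s ≠ x → ‖G s * (((x-s)⁻¹ : ℝ) : ℂ)‖ ≤ D s := by
    intro s hs
    rw [norm_mul, Complex.norm_real, Real.norm_eq_abs]
    apply hDb s hs
    rw [abs_inv, abs_sub_comm]
  -- the A-part limit
  set A0 : ℂ := ∫ s : ℝ, G s * (((s-x)⁻¹ : ℝ) : ℂ) with hA0
  have hAtend : Tendsto (fun ε : ℝ => ∫ s : ℝ, G s * (((s-x)/((s-x)^2+ε^2) : ℝ) : ℂ))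
      (𝓝[>] 0) (𝓝 A0) := by
    apply tendsto_integral_filter_of_dominated_convergence D
    · filter_upwards [self_mem_nhdsWithin] with ε (hε : ε ∈ Set.Ioi (0:ℝ))
      apply Continuous.aestronglyMeasurable
      apply hGc.mul
      apply Complex.continuous_ofReal.comp
      apply Continuous.div (continuous_id.sub continuous_const)
        (((continuous_id.sub continuous_const).pow 2).add continuous_const)
      intro s
      have : (0:ℝ) < ε := hε
      show (s-x)^2+ε^2 ≠ 0
      positivity
    · filter_upwards with ε
      exact hae.mono fun s hs => hbound1 s hs ε
    · exact hDint
    · refine hae.mono fun s hs => ?_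
      have ha : s - x ≠ 0 := sub_ne_zero.mpr hs
      have hrt : Tendsto (fun ε : ℝ => (s-x)/((s-x)^2+ε^2)) (𝓝 0) (𝓝 ((s-x)⁻¹)) := by
        have hden : Tendsto (fun ε : ℝ => (s-x)^2+ε^2) (𝓝 0) (𝓝 ((s-x)^2+0^2)) := by
          exact (continuous_const.add (continuous_pow 2)).tendsto 0
        have h2 : ((s-x)^2+0^2 : ℝ) ≠ 0 := by simpa using pow_ne_zero 2 ha
        have h3 : Tendsto (fun ε : ℝ => (s-x)/((s-x)^2+ε^2)) (𝓝 0)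
            (𝓝 ((s-x)/((s-x)^2+0^2))) := (tendsto_const_nhds (x := (s-x))).div hden h2
        have hval : (s-x)/((s-x)^2+0^2) = (s-x)⁻¹ := by
          field_simp; ring
        rwa [hval] at h3
      exact Tendsto.const_mul (G s)
        ((Complex.continuous_ofReal.tendsto _).comp (hrt.mono_left nhdsWithin_le_nhds))
  -- transfer to f
  have hAf : ∀ ε : ℝ, 0 < ε →
      ∫ s : ℝ, f s * (((s-x)/((s-x)^2+ε^2) : ℝ) : ℂ)
        = ∫ s : ℝ, G s * (((s-x)/((s-x)^2+ε^2) : ℝ) : ℂ) := by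
    intro ε hε
    have hkc : Continuous fun s : ℝ => (((s-x)/((s-x)^2+ε^2) : ℝ) : ℂ) := by
      apply Complex.continuous_ofReal.comp
      apply Continuous.div (continuous_id.sub continuous_const)
        (((continuous_id.sub continuous_const).pow 2).add continuous_const)
      intro s; show (s-x)^2+ε^2 ≠ 0; positivity
    have hkb : ∀ s : ℝ, ‖(((s-x)/((s-x)^2+ε^2) : ℝ) : ℂ)‖ ≤ (2*ε)⁻¹ := by
      intro s
      rw [Complex.norm_real, Real.norm_eq_abs]
      exact abs_kernelA_le' (s-x) hε
    have hGk : Integrable (fun s : ℝ => G s * (((s-x)/((s-x)^2+ε^2) : ℝ) : ℂ)) :=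
      mul_bdd_integrable hGi hkc.aestronglyMeasurable _ hkb
    have hgk : Integrable (fun s : ℝ => gs x s * (((s-x)/((s-x)^2+ε^2) : ℝ) : ℂ)) :=
      mul_bdd_integrable (gs_integrable x) hkc.aestronglyMeasurable _ hkb
    calc ∫ s : ℝ, f s * (((s-x)/((s-x)^2+ε^2) : ℝ) : ℂ)
        = ∫ s : ℝ, (G s * (((s-x)/((s-x)^2+ε^2) : ℝ) : ℂ)
            + f x * (gs x s * (((s-x)/((s-x)^2+ε^2) : ℝ) : ℂ))) := by
          congr 1; funext s; rw [hfs s]; ring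
      _ = (∫ s : ℝ, G s * (((s-x)/((s-x)^2+ε^2) : ℝ) : ℂ))
            + f x * ∫ s : ℝ, gs x s * (((s-x)/((s-x)^2+ε^2) : ℝ) : ℂ) := by
          rw [integral_add hGk (hgk.const_mul (f x)), MeasureTheory.integral_const_mul]
      _ = ∫ s : ℝ, G s * (((s-x)/((s-x)^2+ε^2) : ℝ) : ℂ) := by
          rw [gauss_kernelA_odd x ε, mul_zero, add_zero]
  have hAtendf : Tendsto (fun ε : ℝ => ∫ s : ℝ, f s * (((s-x)/((s-x)^2+ε^2) : ℝ) : ℂ))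
      (𝓝[>] 0) (𝓝 A0) := by
    refine hAtend.congr' ?_
    filter_upwards [self_mem_nhdsWithin] with ε (hε : ε ∈ Set.Ioi (0:ℝ))
    exact (hAf ε hε).symm
  -- measurability of the PV kernel and integrability of G * (x-s)⁻¹
  have hkHmeas : AEStronglyMeasurable (fun s : ℝ => G s * (((x-s)⁻¹ : ℝ) : ℂ)) volume := by
    apply hGc.aestronglyMeasurable.mul
    apply Measurable.aestronglyMeasurable
    exact Complex.measurable_ofReal.comp ((measurable_const.sub measurable_id).inv)
  have hGhk_int : Integrable (fun s : ℝ => G s * (((x-s)⁻¹ : ℝ) : ℂ)) := by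
    apply Integrable.mono' hDint hkHmeas
    exact hae.mono fun s hs => hboundH s hs
  have hB : ∫ s : ℝ, G s * (((x-s)⁻¹ : ℝ) : ℂ) = -A0 := by
    rw [hA0, ← integral_neg]
    congr 1; funext s
    have h1 : ((x-s)⁻¹ : ℝ) = -((s-x)⁻¹) := by
      rw [show x - s = -(s-x) by ring, inv_neg]
    rw [h1]
    push_cast
    ring
  have hSmeas : ∀ ε : ℝ, MeasurableSet {s : ℝ | ε < |s-x|} := fun ε =>
    (isOpen_lt continuous_const ((continuous_id.sub continuous_const).abs)).measurableSet
  -- dominated convergence for the truncated integrals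
  have hcore : Tendsto (fun ε : ℝ =>
      ∫ s : ℝ, Set.indicator {s : ℝ | ε < |s-x|}
        (fun s => G s * (((x-s)⁻¹ : ℝ) : ℂ)) s) (𝓝[>] 0)
      (𝓝 (∫ s : ℝ, G s * (((x-s)⁻¹ : ℝ) : ℂ))) := by
    apply tendsto_integral_filter_of_dominated_convergence D
    · filter_upwards with ε
      exact hkHmeas.indicator (hSmeas ε)
    · filter_upwards with ε
      refine hae.mono fun s hs => ?_
      by_cases hmem : s ∈ {s : ℝ | ε < |s-x|}
      · rw [Set.indicator_of_mem hmem]; exact hboundH s hs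
      · rw [Set.indicator_of_notMem hmem]
        simpa using hDnn s
    · exact hDint
    · refine hae.mono fun s hs => ?_
      have hpos : 0 < |s - x| := abs_pos.mpr (sub_ne_zero.mpr hs)
      have hev : ∀ᶠ ε in 𝓝[>] (0:ℝ),
          Set.indicator {s' : ℝ | ε < |s'-x|} (fun s' => G s' * (((x-s')⁻¹ : ℝ) : ℂ)) s
            = G s * (((x-s)⁻¹ : ℝ) : ℂ) := by
        filter_upwards [Ioo_mem_nhdsGT_of_mem
          (show (0:ℝ) ∈ Set.Ico (0:ℝ) |s-x| from ⟨le_refl _, hpos⟩)] with ε hε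
        exact Set.indicator_of_mem (show s ∈ {s' : ℝ | ε < |s'-x|} from hε.2) _
      exact Tendsto.congr' (Filter.EventuallyEq.symm hev) tendsto_const_nhds
  -- identify truncated integrals of f with those of G
  have heq : ∀ᶠ ε in 𝓝[>] (0:ℝ),
      ∫ s : ℝ, Set.indicator {s : ℝ | ε < |s-x|}
          (fun s => G s * (((x-s)⁻¹ : ℝ) : ℂ)) s
        = ∫ s in {s : ℝ | ε < |s - x|}, f s / ((x : ℂ) - s) := by
    filter_upwards [self_mem_nhdsWithin] with ε (hε : ε ∈ Set.Ioi (0:ℝ))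
    have hε' : (0:ℝ) < ε := hε
    rw [← integral_indicator (hSmeas ε)]
    have hgshk_int : Integrable
        (fun s : ℝ => Set.indicator {s : ℝ | ε < |s-x|}
          (fun s => gs x s * (((x-s)⁻¹ : ℝ) : ℂ)) s) := by
      apply Integrable.mono' ((gs_real_integrable x).const_mul ε⁻¹)
      · apply AEStronglyMeasurable.indicator _ (hSmeas ε)
        apply (gs_cont x).aestronglyMeasurable.mul
        exact (Complex.measurable_ofReal.comp
          ((measurable_const.sub measurable_id).inv)).aestronglyMeasurable
      · filter_upwards with s
        by_cases hmem : s ∈ {s : ℝ | ε < |s-x|}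
        · rw [Set.indicator_of_mem hmem]
          have h2 : ε < |s - x| := hmem
          rw [norm_mul, gs_norm, Complex.norm_real, Real.norm_eq_abs, abs_inv, abs_sub_comm]
          rw [mul_comm (ε⁻¹)]
          apply mul_le_mul_of_nonneg_left _ (Real.exp_nonneg _)
          exact inv_anti₀ hε' h2.le
        · rw [Set.indicator_of_notMem hmem]
          simp only [norm_zero]
          positivity
    have h1 : (fun s : ℝ => Set.indicator {s : ℝ | ε < |s-x|}
        (fun s => f s / ((x : ℂ) - s)) s)
        = fun s : ℝ => Set.indicator {s : ℝ | ε < |s-x|}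
            (fun s => G s * (((x-s)⁻¹ : ℝ) : ℂ)) s
          + f x * Set.indicator {s : ℝ | ε < |s-x|}
            (fun s => gs x s * (((x-s)⁻¹ : ℝ) : ℂ)) s := by
      funext s
      by_cases hmem : s ∈ {s : ℝ | ε < |s-x|}
      · rw [Set.indicator_of_mem hmem, Set.indicator_of_mem hmem, Set.indicator_of_mem hmem]
        rw [hfs s]
        push_cast [div_eq_mul_inv]
        ring
      · rw [Set.indicator_of_notMem hmem, Set.indicator_of_notMem hmem,
          Set.indicator_of_notMem hmem]
        simp
    rw [h1, integral_add (hGhk_int.indicator (hSmeas ε)) (hgshk_int.const_mul (f x)),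
      MeasureTheory.integral_const_mul, gauss_kernelH_odd x ε, mul_zero, add_zero]
  have hHtend : Tendsto (fun ε : ℝ => ∫ s in {s : ℝ | ε < |s - x|}, f s / ((x : ℂ) - s))
      (𝓝[>] 0) (𝓝 (-A0)) := by
    rw [hB] at hcore
    exact hcore.congr' heq
  -- Cauchy boundary values
  have hIntP : ∀ ε : ℝ, 0 < ε →
      Integrable (fun s : ℝ => f s * ((ε/((s-x)^2+ε^2) : ℝ) : ℂ)) := by
    intro ε hε
    apply mul_bdd_integrable f.integrable
    · apply Continuous.aestronglyMeasurable
      apply Complex.continuous_ofReal.comp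
      apply Continuous.div continuous_const
        (((continuous_id.sub continuous_const).pow 2).add continuous_const)
      intro s; show (s-x)^2+ε^2 ≠ 0; positivity
    · intro s
      rw [Complex.norm_real, Real.norm_eq_abs]
      exact abs_kernelP_le (s-x) hε
  have hIntA : ∀ ε : ℝ, 0 < ε →
      Integrable (fun s : ℝ => f s * (((s-x)/((s-x)^2+ε^2) : ℝ) : ℂ)) := by
    intro ε hε
    apply mul_bdd_integrable f.integrable
    · apply Continuous.aestronglyMeasurable
      apply Complex.continuous_ofReal.comp
      apply Continuous.div (continuous_id.sub continuous_const)
        (((continuous_id.sub continuous_const).pow 2).add continuous_const)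
      intro s; show (s-x)^2+ε^2 ≠ 0; positivity
    · intro s
      rw [Complex.norm_real, Real.norm_eq_abs]
      exact abs_kernelA_le' (s-x) hε
  have hCpTend : Tendsto (fun ε : ℝ => ∫ s : ℝ, f s / ((s:ℂ) - ((x:ℂ) + ε*Complex.I)))
      (𝓝[>] 0) (𝓝 (A0 + Complex.I * ((Real.pi : ℂ) * f x))) := by
    have h := hAtendf.add ((poisson_tendsto f x).const_mul Complex.I)
    refine h.congr' ?_
    filter_upwards [self_mem_nhdsWithin] with ε (hε : ε ∈ Set.Ioi (0:ℝ))
    have hε' : (0:ℝ) < ε := hε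
    rw [eq_comm]
    calc ∫ s : ℝ, f s / ((s:ℂ) - ((x:ℂ) + ε*Complex.I))
        = ∫ s : ℝ, (f s * (((s-x)/((s-x)^2+ε^2) : ℝ) : ℂ)
            + Complex.I * (f s * ((ε/((s-x)^2+ε^2) : ℝ) : ℂ))) := by
          congr 1; funext s; exact split_plus (f s) x hε' s
      _ = (∫ s : ℝ, f s * (((s-x)/((s-x)^2+ε^2) : ℝ) : ℂ))
            + Complex.I * ∫ s : ℝ, f s * ((ε/((s-x)^2+ε^2) : ℝ) : ℂ) := by
          rw [integral_add (hIntA ε hε') ((hIntP ε hε').const_mul Complex.I),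
            MeasureTheory.integral_const_mul]
  have hCmTend : Tendsto (fun ε : ℝ => ∫ s : ℝ, f s / ((s:ℂ) - ((x:ℂ) - ε*Complex.I)))
      (𝓝[>] 0) (𝓝 (A0 - Complex.I * ((Real.pi : ℂ) * f x))) := by
    have h := hAtendf.sub ((poisson_tendsto f x).const_mul Complex.I)
    refine h.congr' ?_
    filter_upwards [self_mem_nhdsWithin] with ε (hε : ε ∈ Set.Ioi (0:ℝ))
    have hε' : (0:ℝ) < ε := hε
    rw [eq_comm]
    calc ∫ s : ℝ, f s / ((s:ℂ) - ((x:ℂ) - ε*Complex.I))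
        = ∫ s : ℝ, (f s * (((s-x)/((s-x)^2+ε^2) : ℝ) : ℂ)
            - Complex.I * (f s * ((ε/((s-x)^2+ε^2) : ℝ) : ℂ))) := by
          congr 1; funext s; exact split_minus (f s) x hε' s
      _ = (∫ s : ℝ, f s * (((s-x)/((s-x)^2+ε^2) : ℝ) : ℂ))
            - Complex.I * ∫ s : ℝ, f s * ((ε/((s-x)^2+ε^2) : ℝ) : ℂ) := by
          rw [integral_sub (hIntA ε hε') ((hIntP ε hε').const_mul Complex.I),
            MeasureTheory.integral_const_mul]
  -- assemble
  have hπ : (Real.pi : ℂ) ≠ 0 := Complex.ofReal_ne_zero.mpr Real.pi_ne_zero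
  refine ⟨(2*(Real.pi:ℂ)*Complex.I)⁻¹ * (A0 + Complex.I * ((Real.pi : ℂ) * f x)),
    (2*(Real.pi:ℂ)*Complex.I)⁻¹ * (A0 - Complex.I * ((Real.pi : ℂ) * f x)),
    (Real.pi : ℂ)⁻¹ * (-A0), ?_, ?_, ?_, ?_, ?_, ?_, ?_⟩
  · have := hCpTend.const_mul ((2*(Real.pi:ℂ)*Complex.I)⁻¹)
    simpa [cauchyE] using this
  · have := hCmTend.const_mul ((2*(Real.pi:ℂ)*Complex.I)⁻¹)
    simpa [cauchyE] using this
  · exact hHtend.const_mul ((Real.pi : ℂ)⁻¹)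
  · field_simp
    ring_nf
    try simp [Complex.I_sq]
    try ring_nf
  · field_simp
    ring_nf
    try simp [Complex.I_sq]
    try ring_nf
  · field_simp
    ring_nf
    try simp [Complex.I_sq]
    try ring_nf
  · field_simp
    ring_nf
    try simp [Complex.I_sq]
    try ring_nf
end

section
/- For every f ∈ L²(ℝ), the functions x ↦ Cf(x + iε) converge in L²(ℝ) as ε ↓ 0 to Ĉf := 𝓕^{−1}( 1_{(0,∞)} · 𝓕f ), where 𝓕 is the Fourier transform. Consequently C^+ extends to a bounded operator on L²(ℝ) that is an orthogonal projection (so ‖C^+‖_{L²→L²} = 1), similarly −C^− = 1 − C^+ is an orthogonal projection, and the Hilbert transform H = −i(C^+ + C^−) satisfies 𝓕(Hf)(ξ) = −i·sgn(ξ)·𝓕f(ξ) for a.e. ξ and every f ∈ L²(ℝ). -/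
open MeasureTheory Filter Topology Complex
open Set

local notation "𝕳" => Lp ℂ 2 (volume : Measure ℝ)
local notation "⟪" x ", " y "⟫" => @inner ℂ _ _ x y

lemma aux_exp_integrable {a : ℂ} (ha : a.re < 0) :
    IntegrableOn (fun ξ : ℝ => Complex.exp (a * ξ)) (Ioi (0:ℝ)) := by
  have h := exp_neg_integrableOn_Ioi 0 (b := -a.re) (by linarith)
  refine h.mono' ((Complex.continuous_exp.comp (by fun_prop)).aestronglyMeasurable.restrict)
    (Eventually.of_forall fun x => ?_)
  simp [Complex.norm_exp, mul_comm]

lemma aux_exp_integral {a : ℂ} (ha : a.re < 0) :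
    ∫ ξ in Ioi (0:ℝ), Complex.exp (a * ξ) = -a⁻¹ := by
  have ha0 : a ≠ 0 := fun h => by simp [h] at ha
  have hderiv : ∀ x ∈ Ici (0:ℝ), HasDerivAt (fun ξ : ℝ => Complex.exp (a * ξ) / a)
      (Complex.exp (a * x)) x := by
    intro x _
    have h1 : HasDerivAt (fun ξ : ℝ => a * (ξ:ℂ)) a x := by
      simpa using ((Complex.ofRealCLM.hasDerivAt (x := x)).const_mul a)
    have := (h1.cexp).div_const a
    simpa [mul_comm, mul_div_assoc, mul_div_cancel_left₀ _ ha0] using this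
  have htend : Tendsto (fun ξ : ℝ => Complex.exp (a * ξ) / a) atTop (𝓝 0) := by
    rw [tendsto_zero_iff_norm_tendsto_zero]
    have : (fun ξ : ℝ => ‖Complex.exp (a * ξ) / a‖) =
        fun ξ : ℝ => Real.exp (a.re * ξ) / ‖a‖ := by
      ext ξ; simp [Complex.norm_exp]
    rw [this]
    have : Tendsto (fun ξ : ℝ => a.re * ξ) atTop atBot :=
      Tendsto.neg_mul_atTop ha tendsto_const_nhds tendsto_id
    simpa using (Real.tendsto_exp_atBot.comp this).div_const ‖a‖
  have := integral_Ioi_of_hasDerivAt_of_tendsto' hderiv (aux_exp_integrable ha) htend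
  rw [this]
  simp [div_eq_mul_inv]

lemma aux_conj_exp_kernel (ξ t : ℝ) (w : ℂ) :
    (starRingEnd ℂ) (Complex.exp (-(Complex.I * ξ * t)) * w)
      = Complex.exp (Complex.I * ξ * t) * (starRingEnd ℂ) w := by
  rw [map_mul, ← Complex.exp_conj]
  simp [Complex.conj_I, Complex.conj_ofReal]

lemma aux_integrable_conj {f : ℝ → ℂ} (hf : Integrable f volume) :
    Integrable (fun x => (starRingEnd ℂ) (f x)) volume := by
  refine hf.norm.mono' ?_ (Eventually.of_forall fun x => by simp)
  exact Complex.continuous_conj.comp_aestronglyMeasurable hf.aestronglyMeasurable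

lemma aux_adj_nice (Four FourInv : 𝕳 →L[ℂ] 𝕳)
    (hFour : ∀ (f : ℝ → ℂ) (_ : Integrable f (volume : Measure ℝ))
      (hf2 : MemLp f 2 (volume : Measure ℝ)),
      (Four (hf2.toLp f) : ℝ → ℂ) =ᵐ[volume]
        fun ξ : ℝ => (∫ t : ℝ, Complex.exp (-(Complex.I * ξ * t)) * f t) /
          (Real.sqrt (2 * Real.pi) : ℂ))
    (hFourInv : ∀ (f : ℝ → ℂ) (_ : Integrable f (volume : Measure ℝ))
      (hf2 : MemLp f 2 (volume : Measure ℝ)),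
      (FourInv (hf2.toLp f) : ℝ → ℂ) =ᵐ[volume]
        fun x : ℝ => (∫ t : ℝ, Complex.exp (Complex.I * x * t) * f t) /
          (Real.sqrt (2 * Real.pi) : ℂ))
    (f g : ℝ → ℂ) (hfi : Integrable f volume) (hf2 : MemLp f 2 volume)
    (hgi : Integrable g volume) (hg2 : MemLp g 2 volume) :
    ⟪Four (hf2.toLp f), hg2.toLp g⟫ = ⟪hf2.toLp f, FourInv (hg2.toLp g)⟫ := by
  set c : ℂ := (Real.sqrt (2 * Real.pi) : ℂ) with hc
  have hcconj : (starRingEnd ℂ) c = c := Complex.conj_ofReal _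
  rw [MeasureTheory.L2.inner_def, MeasureTheory.L2.inner_def]
  have hswap : Integrable (Function.uncurry fun ξ t : ℝ =>
      (starRingEnd ℂ) (f t) * (Complex.exp (Complex.I * t * ξ) * g ξ))
      (volume.prod volume) := by
    have base : Integrable (fun z : ℝ × ℝ => g z.1 * (starRingEnd ℂ) (f z.2))
        (volume.prod volume) := hgi.mul_prod (aux_integrable_conj hfi)
    refine base.norm.mono' ?_ (Eventually.of_forall fun z => ?_)
    · have hc1 : Continuous fun z : ℝ × ℝ => Complex.exp (Complex.I * z.2 * z.1) := by
        fun_prop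
      exact ((aux_integrable_conj hfi).aestronglyMeasurable.comp_snd.mul
        (hc1.aestronglyMeasurable.mul hgi.aestronglyMeasurable.comp_fst))
    · simp [Function.uncurry, Complex.norm_exp, mul_comm]
  -- LHS
  have h1 : (∫ ξ : ℝ, ⟪(Four (hf2.toLp f) : ℝ → ℂ) ξ, (hg2.toLp g : ℝ → ℂ) ξ⟫ ∂volume)
      = ∫ ξ : ℝ, (∫ t : ℝ, (starRingEnd ℂ) (f t) * (Complex.exp (Complex.I * t * ξ) * g ξ)) / c
        ∂volume := by
    refine integral_congr_ae ?_
    filter_upwards [hFour f hfi hf2, hg2.coeFn_toLp] with ξ e1 e2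
    rw [RCLike.inner_apply, e1, e2, map_div₀, hcconj, ← integral_conj]
    rw [mul_comm, div_mul_eq_mul_div]
    congr 1
    rw [← integral_mul_const]
    congr 1; funext t
    rw [aux_conj_exp_kernel]
    ring_nf
  rw [h1, integral_div, integral_integral_swap hswap]
  -- RHS
  have h2 : (∫ t : ℝ, ⟪(hf2.toLp f : ℝ → ℂ) t, (FourInv (hg2.toLp g) : ℝ → ℂ) t⟫ ∂volume)
      = ∫ t : ℝ, ((starRingEnd ℂ) (f t) * ∫ ξ : ℝ, Complex.exp (Complex.I * t * ξ) * g ξ) / c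
        ∂volume := by
    refine integral_congr_ae ?_
    filter_upwards [hFourInv g hgi hg2, hf2.coeFn_toLp] with t e1 e2
    rw [RCLike.inner_apply, e1, e2]; ring
  rw [h2, integral_div]
  congr 1
  refine integral_congr_ae (Eventually.of_forall fun t => ?_)
  dsimp only
  rw [MeasureTheory.integral_const_mul]

lemma aux_dense : Dense {h : 𝕳 | Integrable (⇑h) volume} := by
  intro h
  rw [Metric.mem_closure_iff]
  intro δ hδ
  obtain ⟨g, hgc, hgnorm, hgcont, hg2⟩ :=
    (Lp.memLp h).exists_hasCompactSupport_eLpNorm_sub_le (p := 2) (by norm_num)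
      (ε := ENNReal.ofReal (δ/2)) (by simp [ENNReal.ofReal_eq_zero]; linarith)
  refine ⟨hg2.toLp g, ?_, ?_⟩
  · exact (hgcont.integrable_of_hasCompactSupport hgc).congr hg2.coeFn_toLp.symm
  · have key : eLpNorm (⇑(h - hg2.toLp g)) 2 volume ≤ ENNReal.ofReal (δ/2) := by
      refine le_of_eq_of_le (eLpNorm_congr_ae ?_) hgnorm
      filter_upwards [Lp.coeFn_sub h (hg2.toLp g), hg2.coeFn_toLp] with x e1 e2
      simp only [e1, Pi.sub_apply, e2]
    rw [dist_eq_norm, Lp.norm_def]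
    have h2 : (eLpNorm (⇑(h - hg2.toLp g)) 2 volume).toReal ≤ δ/2 := by
      refine le_trans (ENNReal.toReal_mono (by simp) key) ?_
      rw [ENNReal.toReal_ofReal (by linarith)]
    linarith

lemma aux_ext_zero (T : 𝕳 → ℂ) (hT : Continuous T)
    (h0 : ∀ h : 𝕳, Integrable (⇑h) volume → T h = 0) : ∀ h, T h = 0 := by
  have : T = fun _ => (0 : ℂ) :=
    Continuous.ext_on aux_dense hT continuous_const fun x hx => h0 x hx
  exact fun h => congrFun this h

lemma aux_adj_all (Four FourInv : 𝕳 →L[ℂ] 𝕳)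
    (hadjnice : ∀ u v : 𝕳, Integrable (⇑u) volume → Integrable (⇑v) volume →
      ⟪Four u, v⟫ = ⟪u, FourInv v⟫) :
    ∀ u v : 𝕳, ⟪Four u, v⟫ = ⟪u, FourInv v⟫ := by
  have step1 : ∀ v : 𝕳, Integrable (⇑v) volume → ∀ u : 𝕳, ⟪Four u, v⟫ = ⟪u, FourInv v⟫ := by
    intro v hv
    have := aux_ext_zero (fun u => ⟪Four u, v⟫ - ⟪u, FourInv v⟫)
      (((Four.continuous.inner continuous_const)).sub
        (continuous_id.inner continuous_const))
      (fun u hu => sub_eq_zero.mpr (hadjnice u v hu hv))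
    exact fun u => sub_eq_zero.mp (this u)
  intro u v
  have := aux_ext_zero (fun v => ⟪Four u, v⟫ - ⟪u, FourInv v⟫)
    ((continuous_const.inner continuous_id).sub
      (continuous_const.inner FourInv.continuous))
    (fun v hv => sub_eq_zero.mpr (step1 v hv u))
  exact sub_eq_zero.mp (this v)

lemma aux_normSq (v : 𝕳) (w : ℝ → ℂ) (hw : (⇑v : ℝ → ℂ) =ᵐ[volume] w) :
    ‖v‖ ^ 2 = ∫ ξ : ℝ, ‖w ξ‖ ^ 2 ∂volume := by
  calc ‖v‖ ^ 2 = RCLike.re (⟪v, v⟫ : ℂ) := norm_sq_eq_re_inner (𝕜 := ℂ) v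
    _ = RCLike.re (∫ ξ : ℝ, ⟪(⇑v : ℝ → ℂ) ξ, (⇑v : ℝ → ℂ) ξ⟫ ∂volume) := by
        rw [MeasureTheory.L2.inner_def v v]
    _ = ∫ ξ : ℝ, RCLike.re (⟪(⇑v : ℝ → ℂ) ξ, (⇑v : ℝ → ℂ) ξ⟫ : ℂ) ∂volume :=
        (integral_re (L2.integrable_inner v v)).symm
    _ = ∫ ξ : ℝ, ‖w ξ‖ ^ 2 ∂volume := by
        refine integral_congr_ae ?_
        filter_upwards [hw] with ξ e
        rw [e]
        exact (norm_sq_eq_re_inner (𝕜 := ℂ) (w ξ)).symm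


lemma aux_ind_exp_integrable {a : ℂ} (ha : a.re < 0) :
    Integrable (fun ξ : ℝ => (Ioi (0:ℝ)).indicator (fun ξ : ℝ => Complex.exp (a * ξ)) ξ)
      volume := by
  rw [integrable_indicator_iff measurableSet_Ioi]
  exact aux_exp_integrable ha

lemma aux_ind_exp_memL2 {a : ℂ} (ha : a.re < 0) :
    MemLp (fun ξ : ℝ => (Ioi (0:ℝ)).indicator (fun ξ : ℝ => Complex.exp (a * ξ)) ξ) 2
      volume := by
  have hasm : AEStronglyMeasurable
      (fun ξ : ℝ => (Ioi (0:ℝ)).indicator (fun ξ : ℝ => Complex.exp (a * ξ)) ξ) volume :=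
    ((Complex.continuous_exp.comp (by fun_prop)).aestronglyMeasurable).indicator
      measurableSet_Ioi
  rw [memLp_two_iff_integrable_sq_norm hasm]
  have : Integrable (fun ξ : ℝ => (Ioi (0:ℝ)).indicator
      (fun ξ : ℝ => Real.exp ((2*a.re) * ξ)) ξ) volume := by
    rw [integrable_indicator_iff measurableSet_Ioi]
    have h := exp_neg_integrableOn_Ioi 0 (b := -(2*a.re)) (by linarith)
    refine h.congr (Eventually.of_forall fun x => ?_)
    rw [neg_neg]
  refine this.congr (Eventually.of_forall fun ξ => ?_)
  by_cases h : ξ ∈ Ioi (0:ℝ) <;>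
    simp [h, Complex.norm_exp, ← Real.exp_nat_mul, Real.exp_eq_exp] <;> ring


lemma aux_pointwise (Four FourInv : 𝕳 →L[ℂ] 𝕳)
    (hFourInv : ∀ (f : ℝ → ℂ) (_ : Integrable f (volume : Measure ℝ))
      (hf2 : MemLp f 2 (volume : Measure ℝ)),
      (FourInv (hf2.toLp f) : ℝ → ℂ) =ᵐ[volume]
        fun x : ℝ => (∫ t : ℝ, Complex.exp (Complex.I * x * t) * f t) /
          (Real.sqrt (2 * Real.pi) : ℂ))
    (hadj : ∀ u v : 𝕳, ⟪Four u, v⟫ = ⟪u, FourInv v⟫)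
    (f : 𝕳) {ε : ℝ} (hε : 0 < ε) (GLp : 𝕳)
    (hG : (⇑GLp : ℝ → ℂ) =ᵐ[volume]
      fun ξ : ℝ => (if 0 < ξ then (Real.exp (-(ε * ξ)) : ℂ) else 0) * (Four f : ℝ → ℂ) ξ) :
    (fun x : ℝ => cauchyE (⇑f) ((x : ℂ) + (ε : ℂ) * Complex.I)) =ᵐ[volume]
      (⇑(FourInv GLp) : ℝ → ℂ) := by
  set c : ℂ := (Real.sqrt (2 * Real.pi) : ℂ) with hcdef
  have hc2 : c * c = 2 * (Real.pi : ℂ) := by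
    rw [hcdef, ← Complex.ofReal_mul, Real.mul_self_sqrt (by positivity)]
    push_cast; ring
  have hcne : c ≠ 0 := by
    rw [hcdef]
    simp only [ne_eq, Complex.ofReal_eq_zero]
    positivity
  set F : ℝ → ℂ := (⇑(Four f) : ℝ → ℂ) with hFdef
  set m : ℝ → ℂ := fun ξ : ℝ =>
    (Ioi (0:ℝ)).indicator (fun ξ : ℝ => Complex.exp ((-(ε:ℂ)) * ξ)) ξ with hmdef
  have hmre : ((-(ε:ℂ))).re < 0 := by simpa using hε
  have hmif : ∀ ξ : ℝ, m ξ = if 0 < ξ then (Real.exp (-(ε * ξ)) : ℂ) else 0 := by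
    intro ξ
    simp only [hmdef, indicator_apply, mem_Ioi]
    by_cases h : 0 < ξ
    · rw [if_pos h, if_pos h,
        show (-(ε:ℂ) * ξ) = ((-(ε * ξ) : ℝ) : ℂ) by push_cast; ring, Complex.ofReal_exp]
    · rw [if_neg h, if_neg h]
  have hmi : Integrable m volume := aux_ind_exp_integrable hmre
  have hm2 : MemLp m 2 volume := aux_ind_exp_memL2 hmre
  set G : ℝ → ℂ := fun ξ => m ξ * F ξ with hGdef
  -- integrability of G
  have hmconj : ∀ ξ : ℝ, (starRingEnd ℂ) (((hm2.toLp m : 𝕳) : ℝ → ℂ) ξ) * F ξ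
        = (fun ξ => (starRingEnd ℂ) ((hm2.toLp m : ℝ → ℂ) ξ) * F ξ) ξ := fun _ => rfl
  have hGi : Integrable G volume := by
    have h1 := L2.integrable_inner (𝕜 := ℂ) (hm2.toLp m) (Four f)
    refine h1.congr ?_
    filter_upwards [hm2.coeFn_toLp] with ξ e
    rw [RCLike.inner_apply, e]
    have : (starRingEnd ℂ) (m ξ) = m ξ := by
      rw [hmdef]
      by_cases h : ξ ∈ Ioi (0:ℝ)
      · simp only [indicator_of_mem h, ← Complex.ofReal_exp (((-(ε:ℂ)) * ξ)).re]
        rw [← Complex.exp_conj]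
        congr 1
        simp [Complex.conj_ofReal]
      · simp [indicator_of_notMem h]
    rw [this, mul_comm]
  have hG2 : MemLp G 2 volume := by
    refine (Lp.memLp (Four f)).of_le hGi.aestronglyMeasurable ?_
    refine Eventually.of_forall fun ξ => ?_
    rw [hGdef]
    simp only [norm_mul]
    have : ‖m ξ‖ ≤ 1 := by
      rw [hmif ξ]
      by_cases h : 0 < ξ
      · rw [if_pos h]
        simp only [Complex.norm_real, Real.norm_eq_abs,
          abs_of_pos (Real.exp_pos _), Real.exp_le_one_iff]
        nlinarith
      · simp [h]
    calc ‖m ξ‖ * ‖F ξ‖ ≤ 1 * ‖F ξ‖ := by gcongr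
      _ = ‖F ξ‖ := one_mul _
  -- identify GLp
  have hGLp : GLp = hG2.toLp G := by
    refine Lp.ext ?_
    refine hG.trans ?_
    refine EventuallyEq.trans ?_ hG2.coeFn_toLp.symm
    refine Eventually.of_forall fun ξ => ?_
    rw [hGdef]
    simp only [hmif ξ]
  have hmain := hFourInv G hGi hG2
  rw [← hGLp] at hmain
  filter_upwards [hmain] with x hx
  show cauchyE (⇑f) ((x : ℂ) + (ε : ℂ) * Complex.I) = _
  rw [hx]
  -- now fixed x
  set z : ℂ := (x : ℂ) + (ε : ℂ) * Complex.I with hzdef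
  set a : ℂ := -(ε : ℂ) - Complex.I * x with hadef
  have hare : a.re < 0 := by simp [hadef]; exact hε
  set hfn : ℝ → ℂ := fun ξ : ℝ => (Ioi (0:ℝ)).indicator (fun ξ : ℝ => Complex.exp (a * ξ)) ξ
    with hhdef
  have hhi : Integrable hfn volume := aux_ind_exp_integrable hare
  have hh2 : MemLp hfn 2 volume := aux_ind_exp_memL2 hare
  -- step 1+2 : ∫ e^{ixt} G t = ⟪toLp hfn, Four f⟫
  have step12 : (∫ t : ℝ, Complex.exp (Complex.I * x * t) * G t)
      = ⟪hh2.toLp hfn, Four f⟫ := by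
    rw [MeasureTheory.L2.inner_def]
    refine integral_congr_ae ?_
    filter_upwards [hh2.coeFn_toLp] with t e
    rw [RCLike.inner_apply, e, hGdef, mul_comm _ ((starRingEnd ℂ) _)]
    simp only [hhdef, indicator_apply, mem_Ioi, hmif t]
    by_cases h : 0 < t
    · rw [if_pos h, if_pos h]
      have hconj : (starRingEnd ℂ) (Complex.exp (a * t)) = Complex.exp ((-(ε:ℂ) + Complex.I * x) * t) := by
        rw [← Complex.exp_conj]
        congr 1
        simp only [hadef, map_mul, map_sub, map_neg, Complex.conj_I, Complex.conj_ofReal]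
        ring
      rw [hconj, show ((Real.exp (-(ε * t)) : ℝ) : ℂ) = Complex.exp (-(ε:ℂ) * t) by
        rw [show (-(ε:ℂ) * (t:ℂ)) = ((-(ε*t):ℝ):ℂ) by push_cast; ring, Complex.ofReal_exp]]
      rw [← mul_assoc, ← Complex.exp_add]
      congr 2
      ring
    · simp [h]
  -- step 3 : adjoint
  have step3 : ⟪hh2.toLp hfn, Four f⟫ = ⟪FourInv (hh2.toLp hfn), f⟫ := by
    calc ⟪hh2.toLp hfn, Four f⟫ = (starRingEnd ℂ) ⟪Four f, hh2.toLp hfn⟫ :=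
          (inner_conj_symm _ _).symm
      _ = (starRingEnd ℂ) ⟪f, FourInv (hh2.toLp hfn)⟫ := by rw [hadj]
      _ = ⟪FourInv (hh2.toLp hfn), f⟫ := inner_conj_symm _ _
  -- step 4 : kernel integral
  have hker : ∀ s : ℝ, (∫ t : ℝ, Complex.exp (Complex.I * s * t) * hfn t)
      = -((a + Complex.I * s)⁻¹) := by
    intro s
    have h1 : ∀ t : ℝ, Complex.exp (Complex.I * s * t) * hfn t
        = (Ioi (0:ℝ)).indicator (fun t : ℝ => Complex.exp ((a + Complex.I * s) * t)) t := by
      intro t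
      simp only [hhdef, indicator_apply, mem_Ioi]
      by_cases h : 0 < t
      · rw [if_pos h, if_pos h, ← Complex.exp_add]
        congr 1
        ring
      · rw [if_neg h, if_neg h, mul_zero]
    calc (∫ t : ℝ, Complex.exp (Complex.I * s * t) * hfn t)
        = ∫ t : ℝ, (Ioi (0:ℝ)).indicator (fun t : ℝ => Complex.exp ((a + Complex.I * s) * t)) t :=
          integral_congr_ae (Eventually.of_forall h1)
      _ = ∫ t in Ioi (0:ℝ), Complex.exp ((a + Complex.I * s) * t) :=
          integral_indicator measurableSet_Ioi
      _ = -((a + Complex.I * s)⁻¹) := aux_exp_integral (by simp [hadef]; exact hε)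
  have coef : (⇑(FourInv (hh2.toLp hfn)) : ℝ → ℂ) =ᵐ[volume]
      fun s : ℝ => -((a + Complex.I * s)⁻¹) / c := by
    refine (hFourInv hfn hhi hh2).trans (Eventually.of_forall fun s => ?_)
    dsimp only
    rw [hker s]
  -- step 6
  have step6 : ⟪FourInv (hh2.toLp hfn), f⟫
      = ∫ s : ℝ, (Complex.I⁻¹ / c) * ((⇑f : ℝ → ℂ) s / ((s : ℂ) - z)) := by
    rw [MeasureTheory.L2.inner_def]
    refine integral_congr_ae ?_
    filter_upwards [coef] with s e
    rw [RCLike.inner_apply, e]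
    have key : (starRingEnd ℂ) (a + Complex.I * s) = -(Complex.I * ((s : ℂ) - z)) := by
      simp only [hadef, hzdef, map_add, map_sub, map_neg, map_mul, Complex.conj_I,
        Complex.conj_ofReal]
      linear_combination (-(ε:ℂ)) * Complex.I_sq
    rw [map_div₀, map_neg, map_inv₀, key, hcdef]
    rw [Complex.conj_ofReal, inv_neg, neg_neg, mul_inv]
    rw [← hcdef]
    ring
  -- assemble
  rw [step12, step3, step6, MeasureTheory.integral_const_mul]
  simp only [cauchyE]
  rw [show (2 * (Real.pi : ℂ) * Complex.I) = c * c * Complex.I by rw [hc2],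
    show (c * c * Complex.I)⁻¹ = Complex.I⁻¹ / c / c by rw [mul_inv, mul_inv]; ring]
  ring

set_option maxHeartbeats 3000000 in
/-- Let `𝓕, 𝓕⁻¹` be the Fourier transform and its inverse on `L²(ℝ)` (characterized by
the usual integral formulas on `L¹ ∩ L²`), and let `C^+ f = 𝓕⁻¹(1_{(0,∞)} 𝓕 f)`,
`C^- f = 𝓕⁻¹(-1_{(-∞,0)} 𝓕 f)`.  Then for every `f ∈ L²`, `Cf(· + iε) → C^+ f` in `L²`
as `ε ↓ 0`; `C^+` is an orthogonal projection of norm `1`, `-C^- = 1 - C^+` is an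
orthogonal projection, and `H = -i(C^+ + C^-)` satisfies `𝓕(Hf) = -i sgn(·) 𝓕f`. -/
theorem cauchy_plus_L2
    (Four FourInv Cplus Cminus :
      Lp ℂ 2 (volume : Measure ℝ) →L[ℂ] Lp ℂ 2 (volume : Measure ℝ))
    (hFour : ∀ (f : ℝ → ℂ) (_ : Integrable f (volume : Measure ℝ))
      (hf2 : MemLp f 2 (volume : Measure ℝ)),
      (Four (hf2.toLp f) : ℝ → ℂ) =ᵐ[volume]
        fun ξ : ℝ => (∫ t : ℝ, Complex.exp (-(Complex.I * ξ * t)) * f t) /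
          (Real.sqrt (2 * Real.pi) : ℂ))
    (hFourInv : ∀ (f : ℝ → ℂ) (_ : Integrable f (volume : Measure ℝ))
      (hf2 : MemLp f 2 (volume : Measure ℝ)),
      (FourInv (hf2.toLp f) : ℝ → ℂ) =ᵐ[volume]
        fun x : ℝ => (∫ t : ℝ, Complex.exp (Complex.I * x * t) * f t) /
          (Real.sqrt (2 * Real.pi) : ℂ))
    (hunit : ∀ f : Lp ℂ 2 (volume : Measure ℝ), FourInv (Four f) = f ∧ Four (FourInv f) = f)
    (hCp : ∀ f g : Lp ℂ 2 (volume : Measure ℝ),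
      (g : ℝ → ℂ) =ᵐ[volume] (fun ξ : ℝ => if 0 < ξ then (Four f : ℝ → ℂ) ξ else 0) →
      Cplus f = FourInv g)
    (hCm : ∀ f g : Lp ℂ 2 (volume : Measure ℝ),
      (g : ℝ → ℂ) =ᵐ[volume] (fun ξ : ℝ => if ξ < 0 then -((Four f : ℝ → ℂ) ξ) else 0) →
      Cminus f = FourInv g) :
    (∀ f : Lp ℂ 2 (volume : Measure ℝ),
      Tendsto (fun ε : ℝ =>
          eLpNorm (fun x : ℝ => cauchyE f ((x : ℂ) + ε * Complex.I) - (Cplus f : ℝ → ℂ) x)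
            2 (volume : Measure ℝ))
        (𝓝[>] 0) (𝓝 0)) ∧
    ‖Cplus‖ = 1 ∧
    Cplus.comp Cplus = Cplus ∧
    (∀ f g : Lp ℂ 2 (volume : Measure ℝ),
      (inner ℂ (Cplus f) g : ℂ) = inner ℂ f (Cplus g)) ∧
    (1 : Lp ℂ 2 (volume : Measure ℝ) →L[ℂ] Lp ℂ 2 (volume : Measure ℝ)) - Cplus = -Cminus ∧
    (-Cminus).comp (-Cminus) = -Cminus ∧
    (∀ f g : Lp ℂ 2 (volume : Measure ℝ),
      (inner ℂ ((-Cminus) f) g : ℂ) = inner ℂ f ((-Cminus) g)) ∧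
    ∀ f : Lp ℂ 2 (volume : Measure ℝ),
      (Four ((-Complex.I) • (Cplus f + Cminus f)) : ℝ → ℂ) =ᵐ[volume]
        fun ξ : ℝ => (-Complex.I) * (Real.sign ξ : ℂ) * (Four f : ℝ → ℂ) ξ := by  classical
  have hadjnice : ∀ u v : 𝕳, Integrable (⇑u) volume → Integrable (⇑v) volume →
      ⟪Four u, v⟫ = ⟪u, FourInv v⟫ := by
    intro u v hu hv
    have h := aux_adj_nice Four FourInv hFour hFourInv (⇑u) (⇑v) hu (Lp.memLp u) hv
      (Lp.memLp v)
    rwa [Lp.toLp_coeFn, Lp.toLp_coeFn] at h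
  have hadj := aux_adj_all Four FourInv hadjnice
  have hPlanInv : ∀ u v : 𝕳, ⟪FourInv u, FourInv v⟫ = ⟪u, v⟫ := by
    intro u v
    have h := hadj (FourInv u) v
    rw [(hunit u).2] at h
    exact h.symm
  have hPlan : ∀ u v : 𝕳, ⟪Four u, Four v⟫ = ⟪u, v⟫ := by
    intro u v; rw [hadj, (hunit v).1]
  have normInv : ∀ u : 𝕳, ‖FourInv u‖ = ‖u‖ := by
    intro u
    have h1 : ‖FourInv u‖ ^ 2 = ‖u‖ ^ 2 := by
      rw [norm_sq_eq_re_inner (𝕜 := ℂ), norm_sq_eq_re_inner (𝕜 := ℂ), hPlanInv]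
    nlinarith [norm_nonneg (FourInv u), norm_nonneg u]
  have normFour : ∀ u : 𝕳, ‖Four u‖ = ‖u‖ := by
    intro u
    have h1 : ‖Four u‖ ^ 2 = ‖u‖ ^ 2 := by
      rw [norm_sq_eq_re_inner (𝕜 := ℂ), norm_sq_eq_re_inner (𝕜 := ℂ), hPlan]
    nlinarith [norm_nonneg (Four u), norm_nonneg u]
  -- truncations
  have pmem : ∀ u : 𝕳, MemLp (fun ξ : ℝ => if 0 < ξ then (Four u : ℝ → ℂ) ξ else 0) 2
      volume := by
    intro u
    have he : (fun ξ : ℝ => if 0 < ξ then (Four u : ℝ → ℂ) ξ else 0)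
        = (Ioi (0:ℝ)).indicator (⇑(Four u)) := by
      funext ξ; simp [indicator_apply, mem_Ioi]
    rw [he]
    exact (Lp.memLp (Four u)).indicator measurableSet_Ioi
  have mmem : ∀ u : 𝕳, MemLp (fun ξ : ℝ => if ξ < 0 then -((Four u : ℝ → ℂ) ξ) else 0) 2
      volume := by
    intro u
    have he : (fun ξ : ℝ => if ξ < 0 then -((Four u : ℝ → ℂ) ξ) else 0)
        = (Iio (0:ℝ)).indicator (fun ξ => -((Four u : ℝ → ℂ) ξ)) := by
      funext ξ; simp [indicator_apply, mem_Iio]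
    rw [he]
    exact ((Lp.memLp (Four u)).neg).indicator measurableSet_Iio
  set gp : 𝕳 → 𝕳 := fun u => (pmem u).toLp _ with hgpdef
  set gm : 𝕳 → 𝕳 := fun u => (mmem u).toLp _ with hgmdef
  have hgpcoe : ∀ u : 𝕳, (⇑(gp u) : ℝ → ℂ) =ᵐ[volume]
      fun ξ : ℝ => if 0 < ξ then (Four u : ℝ → ℂ) ξ else 0 := fun u => (pmem u).coeFn_toLp
  have hgmcoe : ∀ u : 𝕳, (⇑(gm u) : ℝ → ℂ) =ᵐ[volume]
      fun ξ : ℝ => if ξ < 0 then -((Four u : ℝ → ℂ) ξ) else 0 := fun u => (mmem u).coeFn_toLp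
  have hCpu : ∀ u : 𝕳, Cplus u = FourInv (gp u) := fun u => hCp u (gp u) (hgpcoe u)
  have hCmu : ∀ u : 𝕳, Cminus u = FourInv (gm u) := fun u => hCm u (gm u) (hgmcoe u)
  have hFourCp : ∀ u : 𝕳, Four (Cplus u) = gp u := by
    intro u; rw [hCpu u, (hunit (gp u)).2]
  have hFourCm : ∀ u : 𝕳, Four (Cminus u) = gm u := by
    intro u; rw [hCmu u, (hunit (gm u)).2]
  have hne0 : ∀ᵐ ξ : ℝ ∂volume, ξ ≠ 0 := by
    have h : volume ({(0:ℝ)} : Set ℝ) = 0 := Real.volume_singleton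
    have h2 : ∀ᵐ ξ : ℝ ∂volume, ξ ∈ ({(0:ℝ)} : Set ℝ)ᶜ := compl_mem_ae_iff.mpr h
    filter_upwards [h2] with ξ e
    simpa using e
  -- idempotence
  have hPP : ∀ u : 𝕳, Cplus (Cplus u) = Cplus u := by
    intro u
    have hcond : (⇑(gp u) : ℝ → ℂ) =ᵐ[volume]
        fun ξ : ℝ => if 0 < ξ then (Four (Cplus u) : ℝ → ℂ) ξ else 0 := by
      rw [hFourCp u]
      filter_upwards [hgpcoe u] with ξ e
      rw [e]
      by_cases h : 0 < ξ <;> simp [h]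
    rw [hCp (Cplus u) (gp u) hcond, ← hCpu u]
  have hPPcomp : Cplus.comp Cplus = Cplus := by
    ext1 u; exact hPP u
  -- self-adjointness of Cplus
  have hSA : ∀ u v : 𝕳, ⟪Cplus u, v⟫ = ⟪u, Cplus v⟫ := by
    intro u v
    have key : ⟪gp u, Four v⟫ = ⟪Four u, gp v⟫ := by
      rw [MeasureTheory.L2.inner_def, MeasureTheory.L2.inner_def]
      refine integral_congr_ae ?_
      filter_upwards [hgpcoe u, hgpcoe v] with ξ e1 e2
      rw [RCLike.inner_apply, RCLike.inner_apply, e1, e2]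
      by_cases h : 0 < ξ <;> simp [h]
    calc ⟪Cplus u, v⟫ = ⟪FourInv (gp u), FourInv (Four v)⟫ := by
          rw [hCpu u, (hunit v).1]
      _ = ⟪gp u, Four v⟫ := hPlanInv _ _
      _ = ⟪Four u, gp v⟫ := key
      _ = ⟪Four u, Four (Cplus v)⟫ := by rw [hFourCp v]
      _ = ⟪u, Cplus v⟫ := hPlan _ _
  -- 1 - Cplus = -Cminus
  have hEpt : ∀ u : 𝕳, Cminus u = Cplus u - u := by
    intro u
    have hcond : (⇑(gp u - Four u) : ℝ → ℂ) =ᵐ[volume]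
        fun ξ : ℝ => if ξ < 0 then -((Four u : ℝ → ℂ) ξ) else 0 := by
      filter_upwards [Lp.coeFn_sub (gp u) (Four u), hgpcoe u, hne0] with ξ e1 e2 e3
      rw [e1, Pi.sub_apply, e2]
      rcases lt_trichotomy ξ 0 with h | h | h
      · simp [h, not_lt.mpr h.le]
      · exact absurd h e3
      · simp [h, not_lt.mpr h.le]
    rw [hCm u (gp u - Four u) hcond, map_sub, ← hCpu u, (hunit u).1]
  have hE : (1 : 𝕳 →L[ℂ] 𝕳) - Cplus = -Cminus := by
    ext1 u
    simp only [ContinuousLinearMap.sub_apply, ContinuousLinearMap.one_apply,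
      ContinuousLinearMap.neg_apply, hEpt u]
    abel
  -- norm of Cplus
  have hCpnorm_le : ∀ u : 𝕳, ‖Cplus u‖ ≤ ‖u‖ := by
    intro u
    rw [hCpu u, normInv]
    have hsq1 : ‖gp u‖ ^ 2
        = ∫ ξ : ℝ, ‖(fun ξ : ℝ => if 0 < ξ then (Four u : ℝ → ℂ) ξ else 0) ξ‖ ^ 2 ∂volume :=
      aux_normSq (gp u) _ (hgpcoe u)
    have hsq2 : ‖Four u‖ ^ 2 = ∫ ξ : ℝ, ‖(Four u : ℝ → ℂ) ξ‖ ^ 2 ∂volume :=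
      aux_normSq (Four u) _ (EventuallyEq.refl _ _)
    have hint1 : Integrable
        (fun ξ : ℝ => ‖(fun ξ : ℝ => if 0 < ξ then (Four u : ℝ → ℂ) ξ else 0) ξ‖ ^ 2) volume :=
      (memLp_two_iff_integrable_sq_norm (pmem u).aestronglyMeasurable).mp (pmem u)
    have hint2 : Integrable (fun ξ : ℝ => ‖(Four u : ℝ → ℂ) ξ‖ ^ 2) volume :=
      (memLp_two_iff_integrable_sq_norm (Lp.aestronglyMeasurable (Four u))).mp
        (Lp.memLp (Four u))
    have hmono : ‖gp u‖ ^ 2 ≤ ‖Four u‖ ^ 2 := by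
      rw [hsq1, hsq2]
      refine integral_mono hint1 hint2 fun ξ => ?_
      by_cases h : 0 < ξ <;> simp [h] <;> positivity
    have := normFour u
    nlinarith [norm_nonneg (gp u), norm_nonneg (Four u), norm_nonneg u]
  have hnorm1 : ‖Cplus‖ = 1 := by
    refine le_antisymm (ContinuousLinearMap.opNorm_le_bound _ zero_le_one fun u => by
      simpa using hCpnorm_le u) ?_
    set u0 : ℝ → ℂ := (Ioo (0:ℝ) 1).indicator (fun _ => 1) with hu0def
    have hu0mem : MemLp u0 2 volume :=
      memLp_indicator_const 2 measurableSet_Ioo 1 (Or.inr (by simp [Real.volume_Ioo]))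
    set g0 : 𝕳 := hu0mem.toLp u0 with hg0def
    have hg0 : (⇑g0 : ℝ → ℂ) =ᵐ[volume] u0 := hu0mem.coeFn_toLp
    have hnormg0 : ‖g0‖ = 1 := by
      have hsq : ‖g0‖ ^ 2 = ∫ ξ : ℝ, ‖u0 ξ‖ ^ 2 ∂volume := aux_normSq g0 u0 hg0
      have he : (fun ξ : ℝ => ‖u0 ξ‖ ^ 2) = (Ioo (0:ℝ) 1).indicator (fun _ => (1:ℝ)) := by
        funext ξ
        by_cases h : ξ ∈ Ioo (0:ℝ) 1 <;> simp [hu0def, indicator_apply, h]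
      rw [he, integral_indicator_const (1:ℝ) measurableSet_Ioo] at hsq
      simp only [measureReal_def, Real.volume_Ioo, sub_zero, ENNReal.toReal_ofReal zero_le_one,
        smul_eq_mul, mul_one] at hsq
      nlinarith [norm_nonneg g0]
    have hCpf0 : Cplus (FourInv g0) = FourInv g0 := by
      have hcond : (⇑g0 : ℝ → ℂ) =ᵐ[volume]
          fun ξ : ℝ => if 0 < ξ then (Four (FourInv g0) : ℝ → ℂ) ξ else 0 := by
        rw [(hunit g0).2]
        filter_upwards [hg0] with ξ e
        rw [e]
        by_cases h : 0 < ξ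
        · exact (if_pos h).symm
        · rw [if_neg h, hu0def, indicator_of_notMem (by simp [mem_Ioo]; intro h2; exact absurd h2 h)]
      rw [hCp (FourInv g0) g0 hcond]
    have hle := Cplus.le_opNorm (FourInv g0)
    rw [hCpf0, normInv, hnormg0, mul_one] at hle
    exact hle
  -- -Cminus idempotent
  have hmmcomp : (-Cminus).comp (-Cminus) = -Cminus := by
    rw [← hE]
    ext1 u
    simp only [ContinuousLinearMap.comp_apply, ContinuousLinearMap.sub_apply,
      ContinuousLinearMap.one_apply]
    rw [map_sub, hPP u]
    abel
  -- -Cminus self-adjoint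
  have hSAm : ∀ u v : 𝕳, ⟪(-Cminus) u, v⟫ = ⟪u, (-Cminus) v⟫ := by
    intro u v
    rw [← hE]
    simp only [ContinuousLinearMap.sub_apply, ContinuousLinearMap.one_apply]
    rw [inner_sub_left, inner_sub_right, hSA u v]
  -- Hilbert transform
  have hHil : ∀ u : 𝕳,
      (Four ((-Complex.I) • (Cplus u + Cminus u)) : ℝ → ℂ) =ᵐ[volume]
        fun ξ : ℝ => (-Complex.I) * (Real.sign ξ : ℂ) * (Four u : ℝ → ℂ) ξ := by
    intro u
    have h1 : Four ((-Complex.I) • (Cplus u + Cminus u)) = (-Complex.I) • (gp u + gm u) := by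
      rw [_root_.map_smul, map_add, hFourCp, hFourCm]
    rw [h1]
    filter_upwards [Lp.coeFn_smul (-Complex.I) (gp u + gm u), Lp.coeFn_add (gp u) (gm u),
      hgpcoe u, hgmcoe u, hne0] with ξ e1 e2 e3 e4 e5
    rw [e1, Pi.smul_apply, e2, Pi.add_apply, e3, e4]
    rcases lt_trichotomy ξ 0 with h | h | h
    · rw [if_neg (not_lt.mpr h.le), if_pos h, Real.sign_of_neg h, smul_eq_mul]
      push_cast
      ring
    · exact absurd h e5
    · rw [if_pos h, if_neg (not_lt.mpr h.le), Real.sign_of_pos h, smul_eq_mul]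
      push_cast
      ring
  -- convergence
  have hconv : ∀ f : 𝕳,
      Tendsto (fun ε : ℝ =>
          eLpNorm (fun x : ℝ => cauchyE (⇑f) ((x : ℂ) + (ε : ℂ) * Complex.I)
            - (Cplus f : ℝ → ℂ) x) 2 (volume : Measure ℝ))
        (𝓝[>] 0) (𝓝 0) := by
    intro f
    set F : ℝ → ℂ := (⇑(Four f) : ℝ → ℂ) with hFdef
    set Gfun : ℝ → ℝ → ℂ := fun ε ξ =>
      (if 0 < ξ then (Real.exp (-(ε * ξ)) : ℂ) else 0) * F ξ with hGfundef
    set pfun : ℝ → ℂ := fun ξ : ℝ => if 0 < ξ then F ξ else 0 with hpfundef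
    have hGasm : ∀ ε : ℝ, AEStronglyMeasurable (Gfun ε) volume := by
      intro ε
      have he : Gfun ε = fun ξ =>
          ((Ioi (0:ℝ)).indicator (fun ξ : ℝ => (Real.exp (-(ε * ξ)) : ℂ)) ξ) * F ξ := by
        funext ξ
        simp only [hGfundef, indicator_apply, mem_Ioi]
      rw [he]
      have hc : Continuous fun ξ : ℝ => ((Real.exp (-(ε * ξ)) : ℝ) : ℂ) := by fun_prop
      exact (hc.aestronglyMeasurable.indicator measurableSet_Ioi).mul
        (Lp.aestronglyMeasurable (Four f))
    have hcut : ∀ (ε ξ : ℝ), 0 < ε → ‖(if 0 < ξ then (Real.exp (-(ε * ξ)) : ℂ) else 0)‖ ≤ 1 := by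
      intro ε ξ hε
      by_cases h : 0 < ξ
      · rw [if_pos h]
        simp only [Complex.norm_real, Real.norm_eq_abs,
          abs_of_pos (Real.exp_pos _), Real.exp_le_one_iff]
        nlinarith
      · simp [h]
    have hGmem : ∀ ε : ℝ, 0 < ε → MemLp (Gfun ε) 2 volume := by
      intro ε hε
      refine (Lp.memLp (Four f)).of_le (hGasm ε) (Eventually.of_forall fun ξ => ?_)
      rw [hGfundef]
      calc ‖(if 0 < ξ then (Real.exp (-(ε * ξ)) : ℂ) else 0) * F ξ‖
          = ‖(if 0 < ξ then (Real.exp (-(ε * ξ)) : ℂ) else 0)‖ * ‖F ξ‖ := norm_mul _ _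
        _ ≤ 1 * ‖F ξ‖ := by gcongr; exact hcut ε ξ hε
        _ = ‖F ξ‖ := one_mul _
    have hpmemf : MemLp pfun 2 volume := pmem f
    have hEq : ∀ ε : ℝ, 0 < ε →
        eLpNorm (fun x : ℝ => cauchyE (⇑f) ((x : ℂ) + (ε : ℂ) * Complex.I)
            - (Cplus f : ℝ → ℂ) x) 2 (volume : Measure ℝ)
          = ENNReal.ofReal (Real.sqrt (∫ ξ : ℝ, ‖Gfun ε ξ - pfun ξ‖ ^ 2 ∂volume)) := by
      intro ε hε
      set GLp : 𝕳 := (hGmem ε hε).toLp _ with hGLpdef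
      have hGcoe : (⇑GLp : ℝ → ℂ) =ᵐ[volume] Gfun ε := (hGmem ε hε).coeFn_toLp
      have hpt := aux_pointwise Four FourInv hFourInv hadj f hε GLp hGcoe
      have hae : (fun x : ℝ => cauchyE (⇑f) ((x : ℂ) + (ε : ℂ) * Complex.I)
          - (Cplus f : ℝ → ℂ) x) =ᵐ[volume] (⇑(FourInv GLp - Cplus f) : ℝ → ℂ) := by
        filter_upwards [hpt, Lp.coeFn_sub (FourInv GLp) (Cplus f)] with x e1 e2
        rw [e2, Pi.sub_apply, ← e1]
      rw [eLpNorm_congr_ae hae]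
      have h1 : eLpNorm (⇑(FourInv GLp - Cplus f)) 2 volume
          = ENNReal.ofReal ‖FourInv GLp - Cplus f‖ := by
        rw [Lp.norm_def, ENNReal.ofReal_toReal (Lp.eLpNorm_ne_top _)]
      rw [h1]
      congr 1
      have h2 : FourInv GLp - Cplus f = FourInv (GLp - gp f) := by
        rw [hCpu f, ← map_sub]
      rw [h2, normInv]
      have hsq : ‖GLp - gp f‖ ^ 2 = ∫ ξ : ℝ, ‖Gfun ε ξ - pfun ξ‖ ^ 2 ∂volume := by
        refine aux_normSq _ _ ?_
        filter_upwards [Lp.coeFn_sub GLp (gp f), hGcoe, hgpcoe f] with ξ e1 e2 e3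
        rw [e1, Pi.sub_apply, e2, e3]
      rw [← hsq, Real.sqrt_sq (norm_nonneg _)]
    have hev : ∀ᶠ ε : ℝ in 𝓝[>] (0:ℝ), 0 < ε := by
      filter_upwards [self_mem_nhdsWithin] with ε h
      exact h
    have hFsq : Integrable (fun ξ : ℝ => ‖F ξ‖ ^ 2) volume :=
      (memLp_two_iff_integrable_sq_norm (Lp.aestronglyMeasurable (Four f))).mp
        (Lp.memLp (Four f))
    have hJ : Tendsto (fun ε : ℝ => ∫ ξ : ℝ, ‖Gfun ε ξ - pfun ξ‖ ^ 2 ∂volume)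
        (𝓝[>] (0:ℝ)) (𝓝 0) := by
      have key := tendsto_integral_filter_of_dominated_convergence
        (μ := (volume : Measure ℝ)) (l := 𝓝[>] (0:ℝ))
        (F := fun ε ξ => ‖Gfun ε ξ - pfun ξ‖ ^ 2) (f := fun _ : ℝ => (0:ℝ))
        (bound := fun ξ : ℝ => (2 * ‖F ξ‖) ^ 2)
        (hev.mono fun ε hε => by
          have hasm := ((hGmem ε hε).sub hpmemf).aestronglyMeasurable
          have := hasm.norm.mul hasm.norm
          refine this.congr (Eventually.of_forall fun ξ => ?_)
          simp [Pi.sub_apply, pow_two])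
        (hev.mono fun ε hε => by
          refine Eventually.of_forall fun ξ => ?_
          have hb1 : ‖Gfun ε ξ‖ ≤ ‖F ξ‖ := by
            rw [hGfundef]
            calc ‖(if 0 < ξ then (Real.exp (-(ε * ξ)) : ℂ) else 0) * F ξ‖
                = ‖(if 0 < ξ then (Real.exp (-(ε * ξ)) : ℂ) else 0)‖ * ‖F ξ‖ := norm_mul _ _
              _ ≤ 1 * ‖F ξ‖ := by gcongr; exact hcut ε ξ hε
              _ = ‖F ξ‖ := one_mul _
          have hb2 : ‖pfun ξ‖ ≤ ‖F ξ‖ := by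
            rw [hpfundef]
            by_cases h : 0 < ξ <;> simp [h]
          have hb : ‖Gfun ε ξ - pfun ξ‖ ≤ 2 * ‖F ξ‖ := by
            calc ‖Gfun ε ξ - pfun ξ‖ ≤ ‖Gfun ε ξ‖ + ‖pfun ξ‖ := norm_sub_le _ _
              _ ≤ 2 * ‖F ξ‖ := by linarith
          rw [Real.norm_eq_abs, _root_.abs_of_nonneg (by positivity)]
          exact pow_le_pow_left₀ (norm_nonneg _) hb 2)
        ((hFsq.const_mul 4).congr (Eventually.of_forall fun ξ => by ring))
        (Eventually.of_forall fun ξ => by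
          by_cases h : 0 < ξ
          · have he : (fun ε : ℝ => ‖Gfun ε ξ - pfun ξ‖ ^ 2)
                = fun ε : ℝ => ‖((Real.exp (-(ε * ξ)) : ℝ) : ℂ) * F ξ - F ξ‖ ^ 2 := by
              funext ε
              rw [hGfundef, hpfundef]
              simp only [if_pos h]
            rw [he]
            have hc : Continuous fun ε : ℝ =>
                ‖((Real.exp (-(ε * ξ)) : ℝ) : ℂ) * F ξ - F ξ‖ ^ 2 := by fun_prop
            exact (hc.tendsto' 0 0 (by simp)).mono_left
              (nhdsWithin_le_nhds (s := Ioi (0:ℝ)))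
          · have he : (fun ε : ℝ => ‖Gfun ε ξ - pfun ξ‖ ^ 2) = fun _ : ℝ => (0:ℝ) := by
              funext ε
              rw [hGfundef, hpfundef]
              simp [h]
            rw [he]
            exact tendsto_const_nhds)
      simpa using key
    have hS : Tendsto (fun ε : ℝ => Real.sqrt (∫ ξ : ℝ, ‖Gfun ε ξ - pfun ξ‖ ^ 2 ∂volume))
        (𝓝[>] (0:ℝ)) (𝓝 0) :=
      (Real.continuous_sqrt.tendsto' 0 0 Real.sqrt_zero).comp hJ
    have hO : Tendsto (fun ε : ℝ =>
        ENNReal.ofReal (Real.sqrt (∫ ξ : ℝ, ‖Gfun ε ξ - pfun ξ‖ ^ 2 ∂volume)))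
        (𝓝[>] (0:ℝ)) (𝓝 0) := by
      have := ENNReal.tendsto_ofReal hS
      simpa using this
    refine hO.congr' ?_
    filter_upwards [hev] with ε hε
    exact (hEq ε hε).symm
  exact ⟨hconv, hnorm1, hPPcomp, hSA, hE, hmmcomp, hSAm, hHil⟩
end
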